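/- Let d ≥ 1 and let P ⊆ ℝ^d be a finite union of closed integral unit cubes. Then the number of relatively open integral unit cubes of dimension d−1 that are contained in P but not contained in the topological interior of P equals 2·N_{d−1}(P) − 2d·N_d(P). (Every such cube is contained in the boundary ∂P, so this counts the (d−1)-dimensional relatively open integral unit cubes lying in ∂P.) -/
import Mathlib


/-- The relatively open integral unit cube `B(v, I)`. -/
def openCube {d : ℕ} (v : Fin d → ℤ) (I : Finset (Fin d)) : Set (Fin d → ℝ) :=
  {x | ∀ i, (i ∈ I → (v i : ℝ) < x i ∧ x i < v i + 1) ∧ (i ∉ I → x i = v i)}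

/-- The closed integral unit cube `v + [0,1]^d`. -/
def closedCube {d : ℕ} (v : Fin d → ℤ) : Set (Fin d → ℝ) :=
  {x | ∀ i, (v i : ℝ) ≤ x i ∧ x i ≤ v i + 1}

/-- `N_k(P)`: the number of relatively open integral unit cubes of dimension `k`
contained in `P`. -/
noncomputable def cubeCount {d : ℕ} (P : Set (Fin d → ℝ)) (k : ℕ) : ℕ :=
  {p : (Fin d → ℤ) × Finset (Fin d) | p.2.card = k ∧ openCube p.1 p.2 ⊆ P}.ncard

section Aux

lemma int_sandwich {a w : ℤ} {r : ℝ} (h1 : (a : ℝ) < r) (h2 : r < a + 1)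
    (hw1 : (w : ℝ) ≤ r) (hw2 : r ≤ w + 1) : w = a := by
  have h3 : (w : ℝ) < a + 1 := lt_of_le_of_lt hw1 h2
  have h4 : (a : ℝ) < w + 1 := lt_of_lt_of_le h1 hw2
  have h5 : w < a + 1 := by exact_mod_cast h3
  have h6 : a < w + 1 := by exact_mod_cast h4
  omega

variable {d : ℕ}

/-- the center of a relatively open cube -/
noncomputable def centerPt (v : Fin d → ℤ) (I : Finset (Fin d)) : Fin d → ℝ :=
  fun i => if i ∈ I then (v i : ℝ) + 1/2 else (v i : ℝ)

lemma centerPt_mem (v : Fin d → ℤ) (I : Finset (Fin d)) : centerPt v I ∈ openCube v I := by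
  intro i
  constructor
  · intro hi
    simp only [centerPt, if_pos hi]
    constructor <;> linarith
  · intro hi
    simp only [centerPt, if_neg hi]

lemma openCube_subset_self (v : Fin d → ℤ) (I : Finset (Fin d)) :
    openCube v I ⊆ closedCube v := by
  intro x hx i
  rcases hx i with ⟨h1, h2⟩
  by_cases hi : i ∈ I
  · exact ⟨(h1 hi).1.le, (h1 hi).2.le⟩
  · rw [h2 hi]; constructor <;> linarith

lemma openCube_subset_sub {v : Fin d → ℤ} {I : Finset (Fin d)} {j : Fin d} (hj : j ∉ I) :
    openCube v I ⊆ closedCube (v - Pi.single j 1) := by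
  intro x hx i
  rcases hx i with ⟨h1, h2⟩
  have hvz : (v - Pi.single j 1 : Fin d → ℤ) i = v i - (if i = j then 1 else 0) := by
    simp [Pi.single_apply]
  rw [hvz]
  have hv : ((v i - (if i = j then 1 else 0) : ℤ) : ℝ) = (v i : ℝ) - if i = j then 1 else 0 := by
    by_cases h : i = j <;> simp [h]
  rw [hv]
  by_cases hij : i = j
  · subst hij
    rw [h2 hj]
    simp
  · simp only [if_neg hij, sub_zero]
    by_cases hi : i ∈ I
    · exact ⟨(h1 hi).1.le, (h1 hi).2.le⟩
    · rw [h2 hi]; constructor <;> linarith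

variable {S : Finset (Fin d → ℤ)} {P : Set (Fin d → ℝ)}

lemma mem_P_iff (hP : P = ⋃ v ∈ S, closedCube v) {x : Fin d → ℝ} :
    x ∈ P ↔ ∃ v ∈ S, x ∈ closedCube v := by
  subst hP; simp [Set.mem_iUnion]

lemma cube_subset_iff (hP : P = ⋃ v ∈ S, closedCube v) (v : Fin d → ℤ) :
    openCube v Finset.univ ⊆ P ↔ v ∈ S := by
  constructor
  · intro h
    obtain ⟨w, hwS, hw⟩ := (mem_P_iff hP).1 (h (centerPt_mem v Finset.univ))
    have : w = v := by
      funext i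
      rcases hw i with ⟨hw1, hw2⟩
      have hc : centerPt v Finset.univ i = (v i : ℝ) + 1/2 := by
        simp [centerPt]
      rw [hc] at hw1 hw2
      exact int_sandwich (by linarith) (by linarith) hw1 hw2
    rwa [this] at hwS
  · intro h
    refine (openCube_subset_self v Finset.univ).trans ?_
    rw [hP]
    exact Set.subset_biUnion_of_mem h

lemma exists_erase {I : Finset (Fin d)} (hd : 1 ≤ d) (h : I.card = d - 1) :
    ∃ j, I = Finset.univ.erase j := by
  have hc : Iᶜ.card = 1 := by
    rw [Finset.card_compl, h]
    simp only [Fintype.card_fin]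
    omega
  obtain ⟨j, hj⟩ := Finset.card_eq_one.1 hc
  refine ⟨j, ?_⟩
  have := congrArg (·ᶜ) hj
  simp only [compl_compl] at this
  rw [this, ← Finset.compl_singleton]

lemma erase_inj {j j' : Fin d} (h : Finset.univ.erase j = Finset.univ.erase j') : j = j' := by
  by_contra hne
  have : j ∈ Finset.univ.erase j' := Finset.mem_erase.2 ⟨hne, Finset.mem_univ j⟩
  rw [← h] at this
  exact (Finset.mem_erase.1 this).1 rfl

lemma facet_subset_iff (hP : P = ⋃ v ∈ S, closedCube v) (v : Fin d → ℤ) (j : Fin d) :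
    openCube v (Finset.univ.erase j) ⊆ P ↔ v ∈ S ∨ v - Pi.single j 1 ∈ S := by
  constructor
  · intro h
    obtain ⟨w, hwS, hw⟩ := (mem_P_iff hP).1 (h (centerPt_mem v (Finset.univ.erase j)))
    have hkey : ∀ i, i ≠ j → w i = v i := by
      intro i hij
      have hi : i ∈ Finset.univ.erase j := Finset.mem_erase.2 ⟨hij, Finset.mem_univ i⟩
      rcases hw i with ⟨hw1, hw2⟩
      have hc : centerPt v (Finset.univ.erase j) i = (v i : ℝ) + 1/2 := by
        simp [centerPt, hi]
      rw [hc] at hw1 hw2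
      exact int_sandwich (by linarith) (by linarith) hw1 hw2
    have hj : w j = v j ∨ w j = v j - 1 := by
      rcases hw j with ⟨hw1, hw2⟩
      have hc : centerPt v (Finset.univ.erase j) j = (v j : ℝ) := by
        simp [centerPt]
      rw [hc] at hw1 hw2
      have h1 : w j ≤ v j := by exact_mod_cast hw1
      have h2 : (v j : ℝ) ≤ w j + 1 := hw2
      have h3 : v j ≤ w j + 1 := by exact_mod_cast h2
      omega
    rcases hj with hj | hj
    · left
      have : w = v := funext fun i => by
        by_cases hij : i = j
        · subst hij; exact hj
        · exact hkey i hij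
      rwa [this] at hwS
    · right
      have : w = v - Pi.single j 1 := funext fun i => by
        by_cases hij : i = j
        · subst hij; simp [hj]
        · simp [Pi.single_apply, hij, hkey i hij]
      rwa [this] at hwS
  · rintro (h | h)
    · refine (openCube_subset_self v _).trans ?_
      rw [hP]; exact Set.subset_biUnion_of_mem h
    · refine (openCube_subset_sub (Finset.notMem_erase j Finset.univ)).trans ?_
      rw [hP]; exact Set.subset_biUnion_of_mem h

lemma facet_interior_iff (hP : P = ⋃ v ∈ S, closedCube v) (v : Fin d → ℤ) (j : Fin d) :
    openCube v (Finset.univ.erase j) ⊆ interior P ↔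
      (v ∈ S ∧ v - Pi.single j 1 ∈ S) := by
  constructor
  · intro h
    have hx : centerPt v (Finset.univ.erase j) ∈ interior P :=
      h (centerPt_mem v (Finset.univ.erase j))
    have hnhds : P ∈ nhds (centerPt v (Finset.univ.erase j)) :=
      Filter.mem_of_superset (isOpen_interior.mem_nhds hx) interior_subset
    obtain ⟨ε, hε, hball⟩ := Metric.mem_nhds_iff.1 hnhds
    set x0 := centerPt v (Finset.univ.erase j) with hx0
    have hx0j : x0 j = (v j : ℝ) := by simp [hx0, centerPt]
    have hx0i : ∀ i, i ≠ j → x0 i = (v i : ℝ) + 1/2 := by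
      intro i hij
      simp [hx0, centerPt, Finset.mem_erase, hij]
    set t : ℝ := min (ε/2) (1/2) with ht
    have ht0 : 0 < t := lt_min (by linarith) (by norm_num)
    have ht1 : t ≤ 1/2 := min_le_right _ _
    have htε : t < ε := lt_of_le_of_lt (min_le_left _ _) (by linarith)
    have key : ∀ c : ℝ, (∀ i, i ≠ j → True) → dist (Function.update x0 j c) x0 ≤ |c - v j| := by
      intro c _
      rw [dist_pi_le_iff (abs_nonneg _)]
      intro i
      by_cases hij : i = j
      · subst hij
        rw [Function.update_self, Real.dist_eq, hx0j]
      · rw [Function.update_of_ne hij]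
        simp [abs_nonneg]
    have hmem : ∀ c : ℝ, |c - v j| ≤ t → Function.update x0 j c ∈ P := by
      intro c hc
      apply hball
      rw [Metric.mem_ball]
      calc dist (Function.update x0 j c) x0 ≤ |c - v j| := key c (fun _ _ => trivial)
        _ ≤ t := hc
        _ < ε := htε
    -- generic: any w∈S whose cube contains such a point has w i = v i for i ≠ j
    have width : ∀ (c : ℝ) (w : Fin d → ℤ), Function.update x0 j c ∈ closedCube w →
        ∀ i, i ≠ j → w i = v i := by
      intro c w hw i hij
      rcases hw i with ⟨hw1, hw2⟩
      rw [Function.update_of_ne hij, hx0i i hij] at hw1 hw2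
      exact int_sandwich (by linarith) (by linarith) hw1 hw2
    constructor
    · -- use the point shifted up at coordinate j
      have hyP := hmem ((v j : ℝ) + t) (by rw [add_sub_cancel_left, abs_of_pos ht0])
      obtain ⟨w, hwS, hw⟩ := (mem_P_iff hP).1 hyP
      have hwj : w j = v j := by
        rcases hw j with ⟨hw1, hw2⟩
        rw [Function.update_self] at hw1 hw2
        exact int_sandwich (by linarith) (by linarith) hw1 hw2
      have : w = v := funext fun i => by
        by_cases hij : i = j
        · subst hij; exact hwj
        · exact width _ w hw i hij
      rwa [this] at hwS
    · -- use the point shifted down at coordinate j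
      have hyP := hmem ((v j : ℝ) - t) (by
        rw [sub_sub_cancel_left, abs_neg, abs_of_pos ht0])
      obtain ⟨w, hwS, hw⟩ := (mem_P_iff hP).1 hyP
      have hwj : w j = v j - 1 := by
        rcases hw j with ⟨hw1, hw2⟩
        rw [Function.update_self] at hw1 hw2
        have : ((v j - 1 : ℤ) : ℝ) < (v j : ℝ) - t := by push_cast; linarith
        have h2 : ((v j : ℝ) - t) < ((v j - 1 : ℤ) : ℝ) + 1 := by push_cast; linarith
        exact int_sandwich this h2 hw1 hw2
      have : w = v - Pi.single j 1 := funext fun i => by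
        by_cases hij : i = j
        · subst hij; simp [hwj]
        · simp [Pi.single_apply, hij, width _ w hw i hij]
      rwa [this] at hwS
  · rintro ⟨h1, h2⟩
    intro x hx
    rw [mem_interior]
    refine ⟨Set.univ.pi (fun i => if i = j then Set.Ioo ((v j : ℝ) - 1) ((v j : ℝ) + 1)
      else Set.Ioo (v i : ℝ) ((v i : ℝ) + 1)), ?_, ?_, ?_⟩
    · intro y hy
      rw [Set.mem_univ_pi] at hy
      rw [hP]
      rcases le_or_gt (v j : ℝ) (y j) with hyj | hyj
      · refine Set.mem_biUnion h1 ?_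
        intro i
        have := hy i
        by_cases hij : i = j
        · subst hij
          simp only [if_pos rfl, Set.mem_Ioo] at this
          exact ⟨hyj, this.2.le⟩
        · simp only [if_neg hij, Set.mem_Ioo] at this
          exact ⟨this.1.le, this.2.le⟩
      · refine Set.mem_biUnion h2 ?_
        intro i
        have hvz : (v - Pi.single j 1 : Fin d → ℤ) i = v i - (if i = j then 1 else 0) := by
          simp [Pi.single_apply]
        rw [hvz]
        have hvi : ((v i - (if i = j then 1 else 0) : ℤ) : ℝ) = (v i : ℝ) - if i = j then 1 else 0 := by
          by_cases h : i = j <;> simp [h]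
        rw [hvi]
        have := hy i
        by_cases hij : i = j
        · subst hij
          rw [if_pos rfl] at this ⊢
          simp only [Set.mem_Ioo] at this
          exact ⟨by linarith [this.1], by linarith [this.2]⟩
        · rw [if_neg hij] at this ⊢
          simp only [Set.mem_Ioo] at this
          rw [sub_zero]
          exact ⟨this.1.le, this.2.le⟩
    · exact isOpen_set_pi Set.finite_univ (fun i _ => by
        by_cases hij : i = j <;> simp [hij, isOpen_Ioo])
    · rw [Set.mem_univ_pi]
      intro i
      rcases hx i with ⟨ha, hb⟩
      by_cases hij : i = j
      · subst hij
        have : x i = (v i : ℝ) := hb (Finset.notMem_erase i Finset.univ)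
        simp only [if_pos rfl, Set.mem_Ioo, this]
        constructor <;> linarith
      · have hi : i ∈ Finset.univ.erase j := Finset.mem_erase.2 ⟨hij, Finset.mem_univ i⟩
        simp only [if_neg hij, Set.mem_Ioo]
        exact ha hi

end Aux

/-- The number of relatively open integral unit cubes of dimension `d-1` contained
in `P` but not contained in the topological interior of `P` (i.e., those lying in
the boundary of `P`) equals `2·N_{d-1}(P) - 2d·N_d(P)`. -/
theorem boundary_facet_count (d : ℕ) (hd : 1 ≤ d) (S : Finset (Fin d → ℤ))
    (P : Set (Fin d → ℝ)) (hP : P = ⋃ v ∈ S, closedCube v) :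
    ({p : (Fin d → ℤ) × Finset (Fin d) |
        p.2.card = d - 1 ∧ openCube p.1 p.2 ⊆ P ∧ ¬ openCube p.1 p.2 ⊆ interior P}.ncard : ℤ)
      = 2 * (cubeCount P (d - 1) : ℤ) - 2 * (d : ℤ) * (cubeCount P d : ℤ) := by
  classical
  set A : Finset ((Fin d → ℤ) × Fin d) := S ×ˢ Finset.univ with hA
  set B : Finset ((Fin d → ℤ) × Fin d) :=
    A.image (fun p => (p.1 + Pi.single p.2 1, p.2)) with hB
  have memA : ∀ v j, (v, j) ∈ A ↔ v ∈ S := by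
    intro v j; simp [hA]
  have memB : ∀ v j, (v, j) ∈ B ↔ v - Pi.single j 1 ∈ S := by
    intro v j
    simp only [hB, Finset.mem_image]
    constructor
    · rintro ⟨⟨u, j'⟩, hu, heq⟩
      simp only [Prod.mk.injEq] at heq
      obtain ⟨h1, h2⟩ := heq
      subst h2
      have huv : v - Pi.single j' 1 = u := by rw [← h1, add_sub_cancel_right]
      rw [huv]
      exact (memA u j').1 hu
    · intro h
      refine ⟨(v - Pi.single j 1, j), (memA _ _).2 h, ?_⟩
      simp only [Prod.mk.injEq, sub_add_cancel, and_self]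
  set φ : ((Fin d → ℤ) × Fin d) → ((Fin d → ℤ) × Finset (Fin d)) :=
    fun p => (p.1, Finset.univ.erase p.2) with hφ
  have hφinj : Function.Injective φ := by
    rintro ⟨v, j⟩ ⟨v', j'⟩ h
    simp only [hφ, Prod.mk.injEq] at h
    obtain ⟨h1, h2⟩ := h
    rw [Prod.mk.injEq]
    exact ⟨h1, erase_inj h2⟩
  have memAB : ∀ v j, (v, j) ∈ A ∪ B ↔ openCube v (Finset.univ.erase j) ⊆ P := by
    intro v j
    rw [Finset.mem_union, memA, memB, facet_subset_iff hP]
  -- first set : all facets in P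
  have hset1 : {p : (Fin d → ℤ) × Finset (Fin d) | p.2.card = d - 1 ∧ openCube p.1 p.2 ⊆ P}
      = ↑((A ∪ B).image φ) := by
    ext ⟨v, I⟩
    simp only [Set.mem_setOf_eq, Finset.coe_image, Set.mem_image, Finset.mem_coe]
    constructor
    · rintro ⟨hcard, hsub⟩
      obtain ⟨j, rfl⟩ := exists_erase hd hcard
      exact ⟨(v, j), (memAB v j).2 hsub, rfl⟩
    · rintro ⟨⟨v', j⟩, hmem, heq⟩
      simp only [hφ, Prod.mk.injEq] at heq
      obtain ⟨h1, h2⟩ := heq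
      subst h1; subst h2
      refine ⟨?_, (memAB v' j).1 hmem⟩
      rw [Finset.card_erase_of_mem (Finset.mem_univ j), Finset.card_univ, Fintype.card_fin]
  -- second set : boundary facets
  have hset2 : {p : (Fin d → ℤ) × Finset (Fin d) |
      p.2.card = d - 1 ∧ openCube p.1 p.2 ⊆ P ∧ ¬ openCube p.1 p.2 ⊆ interior P}
      = ↑(((A ∪ B) \ (A ∩ B)).image φ) := by
    ext ⟨v, I⟩
    simp only [Set.mem_setOf_eq, Finset.coe_image, Set.mem_image, Finset.mem_coe]
    constructor
    · rintro ⟨hcard, hsub, hnint⟩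
      obtain ⟨j, rfl⟩ := exists_erase hd hcard
      refine ⟨(v, j), ?_, rfl⟩
      rw [Finset.mem_sdiff]
      refine ⟨(memAB v j).2 hsub, ?_⟩
      rw [Finset.mem_inter, memA, memB]
      intro hc
      exact hnint ((facet_interior_iff hP v j).2 ⟨hc.1, hc.2⟩)
    · rintro ⟨⟨v', j⟩, hmem, heq⟩
      simp only [hφ, Prod.mk.injEq] at heq
      obtain ⟨h1, h2⟩ := heq
      subst h1; subst h2
      rw [Finset.mem_sdiff] at hmem
      rcases hmem with ⟨hm1, hm2⟩
      rw [Finset.mem_inter, memA, memB] at hm2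
      refine ⟨?_, (memAB v' j).1 hm1, ?_⟩
      · rw [Finset.card_erase_of_mem (Finset.mem_univ j), Finset.card_univ, Fintype.card_fin]
      · intro hc
        exact hm2 ((facet_interior_iff hP v' j).1 hc)
  -- third set : full cubes
  have hset3 : {p : (Fin d → ℤ) × Finset (Fin d) | p.2.card = d ∧ openCube p.1 p.2 ⊆ P}
      = ↑(S.image (fun v => (v, (Finset.univ : Finset (Fin d))))) := by
    ext ⟨v, I⟩
    simp only [Set.mem_setOf_eq, Finset.coe_image, Set.mem_image, Finset.mem_coe]
    constructor
    · rintro ⟨hcard, hsub⟩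
      have hI : I = Finset.univ := Finset.eq_univ_of_card I (by rw [hcard, Fintype.card_fin])
      subst hI
      exact ⟨v, (cube_subset_iff hP v).1 hsub, rfl⟩
    · rintro ⟨u, hu, heq⟩
      simp only [Prod.mk.injEq] at heq
      obtain ⟨h1, h2⟩ := heq
      subst h1; subst h2
      exact ⟨by rw [Finset.card_univ, Fintype.card_fin], (cube_subset_iff hP u).2 hu⟩
  have hc1 : cubeCount P (d - 1) = (A ∪ B).card := by
    rw [cubeCount, hset1, Set.ncard_coe_finset, Finset.card_image_of_injective _ hφinj]
  have hc2 : cubeCount P d = S.card := by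
    rw [cubeCount, hset3, Set.ncard_coe_finset, Finset.card_image_of_injective]
    intro a b h
    exact (Prod.ext_iff.1 h).1
  have hcb : {p : (Fin d → ℤ) × Finset (Fin d) |
      p.2.card = d - 1 ∧ openCube p.1 p.2 ⊆ P ∧ ¬ openCube p.1 p.2 ⊆ interior P}.ncard
      = ((A ∪ B) \ (A ∩ B)).card := by
    rw [hset2, Set.ncard_coe_finset, Finset.card_image_of_injective _ hφinj]
  have hAcard : A.card = S.card * d := by
    rw [hA, Finset.card_product, Finset.card_univ, Fintype.card_fin]
  have hBcard : B.card = A.card := by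
    rw [hB]
    apply Finset.card_image_of_injective
    rintro ⟨u, j⟩ ⟨u', j'⟩ h
    simp only [Prod.mk.injEq] at h
    obtain ⟨h1, h2⟩ := h
    subst h2
    have hu : u = u' := by
      have h3 := congrArg (fun w => w - Pi.single j 1) h1
      simpa [add_sub_cancel_right] using h3
    rw [Prod.mk.injEq]
    exact ⟨hu, rfl⟩
  have hkey : (A ∪ B).card + (A ∩ B).card = 2 * (S.card * d) := by
    rw [Finset.card_union_add_card_inter, hBcard, hAcard]
    ring
  have hle : (A ∩ B).card ≤ (A ∪ B).card :=
    Finset.card_le_card Finset.inter_subset_union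
  have hsd : ((A ∪ B) \ (A ∩ B)).card = (A ∪ B).card - (A ∩ B).card :=
    Finset.card_sdiff_of_subset Finset.inter_subset_union
  rw [hcb, hc1, hc2, hsd, Nat.cast_sub hle]
  have hcast : ((A ∪ B).card : ℤ) + ((A ∩ B).card : ℤ) = 2 * ((S.card : ℤ) * (d : ℤ)) := by
    exact_mod_cast hkey
  linarith [hcast]
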